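/- Let a > 0, let 𝒜 : ℝ^{m×n} → ℝ^d (m ≤ n) be a linear map, b ∈ ℝ^d, and suppose there exists X̄ with 𝒜(X̄) = b. Let (λ_k) be a decreasing sequence of positive real numbers with λ_k → 0, and for each k let X_k be a global minimizer of ‖𝒜(X) − b‖₂² + λ_k·P_a(X) over X ∈ ℝ^{m×n}. Then every accumulation point X* of the sequence (X_k) is an optimal solution of the problem (TrAMRM); that is, 𝒜(X*) = b and P_a(X*) ≤ P_a(X) for every X with 𝒜(X) = b. -/
import Mathlib


open Matrix Filter

/-- The singular values of a real `m × n` matrix: square roots of the eigenvalues of `X * Xᵀ`. -/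
noncomputable def sv {m n : ℕ} (X : Matrix (Fin m) (Fin n) ℝ) : Fin m → ℝ :=
  fun i => Real.sqrt ((Matrix.isHermitian_mul_conjTranspose_self X).eigenvalues i)

/-- The singular values arranged in descending order: `svSorted X 0 ≥ svSorted X 1 ≥ ⋯`. -/
noncomputable def svSorted {m n : ℕ} (X : Matrix (Fin m) (Fin n) ℝ) : Fin m → ℝ :=
  fun i => sv X (Tuple.sort (sv X) i.rev)

/-- `P_a(X) = Σᵢ a σᵢ(X)/(a σᵢ(X) + 1)`. -/
noncomputable def Pa {m n : ℕ} (a : ℝ) (X : Matrix (Fin m) (Fin n) ℝ) : ℝ :=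
  ∑ i, a * sv X i / (a * sv X i + 1)

/-- Frobenius norm. -/
noncomputable def frobNorm {m n : ℕ} (X : Matrix (Fin m) (Fin n) ℝ) : ℝ :=
  Real.sqrt (∑ i, ∑ j, (X i j) ^ 2)

/-- Nuclear norm: the sum of the singular values. -/
noncomputable def nuclearNorm {m n : ℕ} (X : Matrix (Fin m) (Fin n) ℝ) : ℝ :=
  ∑ i, sv X i

/-- The rectangular `m × n` "diagonal" matrix with diagonal entries `σ`. -/
def diagRect {m n : ℕ} (σ : Fin m → ℝ) : Matrix (Fin m) (Fin n) ℝ :=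
  Matrix.of fun i j => if (j : ℕ) = (i : ℕ) then σ i else 0

/-- The `r`-restricted isometry constant `δ_r(𝒜)`. -/
noncomputable def ripConst {m n d : ℕ}
    (A : Matrix (Fin m) (Fin n) ℝ →ₗ[ℝ] EuclideanSpace ℝ (Fin d)) (r : ℕ) : ℝ :=
  sInf {δ : ℝ | 0 ≤ δ ∧ ∀ X : Matrix (Fin m) (Fin n) ℝ, X.rank ≤ r →
    (1 - δ) * frobNorm X ^ 2 ≤ ‖A X‖ ^ 2 ∧ ‖A X‖ ^ 2 ≤ (1 + δ) * frobNorm X ^ 2}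

-- power trace identity
lemma trace_pow_eq {m : ℕ} (B : Matrix (Fin m) (Fin m) ℝ) (hB : B.IsHermitian) (p : ℕ) :
    (B ^ p).trace = ∑ i, hB.eigenvalues i ^ p := by
  set U : Matrix (Fin m) (Fin m) ℝ := (Matrix.IsHermitian.eigenvectorUnitary hB : Matrix (Fin m) (Fin m) ℝ) with hUdef
  set D : Matrix (Fin m) (Fin m) ℝ := Matrix.diagonal (RCLike.ofReal ∘ hB.eigenvalues) with hDdef
  have h1 : U * star U = 1 := Matrix.mem_unitaryGroup_iff.mp (Matrix.IsHermitian.eigenvectorUnitary hB).2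
  have h2 : star U * U = 1 := Matrix.mem_unitaryGroup_iff'.mp (Matrix.IsHermitian.eigenvectorUnitary hB).2
  have hspec : B = U * D * star U := hB.spectral_theorem
  have hpow : ∀ q : ℕ, B ^ q = U * D ^ q * star U := by
    intro q
    induction q with
    | zero => simp [h1]
    | succ q ih =>
      rw [pow_succ, ih, hspec]
      have : star U * (U * (D * star U)) = D * star U := by
        rw [← mul_assoc, h2, one_mul]
      simp only [mul_assoc, this]
      rw [show D ^ q * (D * star U) = D ^ (q+1) * star U by rw [← mul_assoc, ← pow_succ]]
  rw [hpow p, Matrix.trace_mul_comm, ← mul_assoc, h2, one_mul, hDdef,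
    Matrix.diagonal_pow, Matrix.trace_diagonal]
  simp [RCLike.ofReal_real_eq_id]

lemma sum_eval_eq {m : ℕ} (q : Polynomial ℝ) (B : Matrix (Fin m) (Fin m) ℝ) (hB : B.IsHermitian) :
    ∑ j ∈ q.support, q.coeff j * (B ^ j).trace = ∑ i, q.eval (hB.eigenvalues i) := by
  simp only [trace_pow_eq B hB, Finset.mul_sum]
  rw [Finset.sum_comm]
  refine Finset.sum_congr rfl fun i _ => ?_
  rw [Polynomial.eval_eq_sum, Polynomial.sum_def]

lemma tendsto_sum_eig {m : ℕ} {g : ℝ → ℝ} (hg : Continuous g)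
    {H : ℕ → Matrix (Fin m) (Fin m) ℝ} {H₀ : Matrix (Fin m) (Fin m) ℝ}
    (hpsd : ∀ k, (H k).PosSemidef) (hpsd0 : H₀.PosSemidef)
    (hH : Tendsto H atTop (nhds H₀)) :
    Tendsto (fun k => ∑ i, g ((hpsd k).1.eigenvalues i)) atTop
      (nhds (∑ i, g (hpsd0.1.eigenvalues i))) := by
  -- traces converge, hence bounded
  have htr : Tendsto (fun k => (H k).trace) atTop (nhds H₀.trace) :=
    ((continuous_id.matrix_trace).tendsto H₀).comp hH
  obtain ⟨C, hC⟩ := htr.bddAbove_range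
  set R : ℝ := max C H₀.trace with hR
  -- all eigenvalues lie in [0, R]
  have hev : ∀ (B : Matrix (Fin m) (Fin m) ℝ) (hB : B.PosSemidef), B.trace ≤ R →
      ∀ i, hB.1.eigenvalues i ∈ Set.Icc (0:ℝ) R := by
    intro B hB htrB i
    refine ⟨hB.eigenvalues_nonneg i, ?_⟩
    have hsum : ∑ j, hB.1.eigenvalues j = B.trace := by
      have := trace_pow_eq B hB.1 1
      simpa using this.symm
    calc hB.1.eigenvalues i ≤ ∑ j, hB.1.eigenvalues j :=
          Finset.single_le_sum (fun j _ => hB.eigenvalues_nonneg j) (Finset.mem_univ i)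
      _ = B.trace := hsum
      _ ≤ R := htrB
  have hevk : ∀ k i, (hpsd k).1.eigenvalues i ∈ Set.Icc (0:ℝ) R :=
    fun k i => hev (H k) (hpsd k) (le_max_of_le_left (hC (Set.mem_range_self k))) i
  have hev0 : ∀ i, hpsd0.1.eigenvalues i ∈ Set.Icc (0:ℝ) R :=
    hev H₀ hpsd0 (le_max_right _ _)
  rw [Metric.tendsto_atTop]
  intro ε hε
  set ε' : ℝ := ε / (2 * m + 2) with hε'def
  have hmpos : (0:ℝ) < 2 * m + 2 := by positivity
  have hε' : 0 < ε' := div_pos hε hmpos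
  obtain ⟨q, hq⟩ := exists_polynomial_near_of_continuousOn 0 R g hg.continuousOn ε' hε'
  set S : Matrix (Fin m) (Fin m) ℝ → ℝ := fun B => ∑ j ∈ q.support, q.coeff j * (B ^ j).trace
    with hSdef
  have hScont : Continuous S := by
    refine continuous_finset_sum _ fun j _ => Continuous.mul continuous_const ?_
    exact (continuous_pow j).matrix_trace
  have hS : Tendsto (fun k => S (H k)) atTop (nhds (S H₀)) := (hScont.tendsto H₀).comp hH
  obtain ⟨N, hN⟩ := (Metric.tendsto_atTop.mp hS) ε' hε'
  refine ⟨N, fun k hk => ?_⟩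
  have hqk : ∀ (B : Matrix (Fin m) (Fin m) ℝ) (hB : B.PosSemidef),
      (∀ i, hB.1.eigenvalues i ∈ Set.Icc (0:ℝ) R) →
      |(∑ i, g (hB.1.eigenvalues i)) - S B| ≤ m * ε' := by
    intro B hB hmem
    have hSB : S B = ∑ i, q.eval (hB.1.eigenvalues i) := sum_eval_eq q B hB.1
    rw [hSB, ← Finset.sum_sub_distrib]
    calc |∑ i, (g (hB.1.eigenvalues i) - q.eval (hB.1.eigenvalues i))|
        ≤ ∑ i, |g (hB.1.eigenvalues i) - q.eval (hB.1.eigenvalues i)| :=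
          Finset.abs_sum_le_sum_abs _ _
      _ ≤ ∑ _i : Fin m, ε' := by
          refine Finset.sum_le_sum fun i _ => ?_
          rw [abs_sub_comm]
          exact le_of_lt (hq _ (hmem i))
      _ = m * ε' := by simp [mul_comm]
  have h1 := hqk (H k) (hpsd k) (hevk k)
  have h0 := hqk H₀ hpsd0 hev0
  have h2 : |S (H k) - S H₀| < ε' := by
    have := hN k hk
    rwa [Real.dist_eq] at this
  rw [Real.dist_eq]
  calc |(∑ i, g ((hpsd k).1.eigenvalues i)) - ∑ i, g (hpsd0.1.eigenvalues i)|
      ≤ |(∑ i, g ((hpsd k).1.eigenvalues i)) - S (H k)| + |S (H k) - S H₀|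
        + |S H₀ - ∑ i, g (hpsd0.1.eigenvalues i)| := by
        have := abs_sub_le (∑ i, g ((hpsd k).1.eigenvalues i)) (S (H k)) (∑ i, g (hpsd0.1.eigenvalues i))
        have h3 := abs_sub_le (S (H k)) (S H₀) (∑ i, g (hpsd0.1.eigenvalues i))
        linarith
    _ ≤ m * ε' + ε' + m * ε' := by
        rw [abs_sub_comm (S H₀)] at *
        exact add_le_add (add_le_add h1 (le_of_lt h2)) h0
    _ < ε := by
        have : (2 * m + 2) * ε' = ε := by
          rw [hε'def]; field_simp
        nlinarith

lemma Pa_eq_sum_g {m n : ℕ} (a : ℝ) (Z : Matrix (Fin m) (Fin n) ℝ)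
    (hZ : (Z * Zᴴ).PosSemidef) :
    Pa a Z = ∑ i, (fun μ => a * Real.sqrt μ / (a * Real.sqrt μ + 1)) (hZ.1.eigenvalues i) := rfl

lemma tendsto_Pa {m n : ℕ} {a : ℝ} (ha : 0 < a) {Y : ℕ → Matrix (Fin m) (Fin n) ℝ}
    {X : Matrix (Fin m) (Fin n) ℝ} (h : Tendsto Y atTop (nhds X)) :
    Tendsto (fun k => Pa a (Y k)) atTop (nhds (Pa a X)) := by
  set g : ℝ → ℝ := fun μ => a * Real.sqrt μ / (a * Real.sqrt μ + 1) with hgdef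
  have hg : Continuous g := by
    refine Continuous.div (continuous_const.mul Real.continuous_sqrt)
      ((continuous_const.mul Real.continuous_sqrt).add continuous_const) fun μ => ?_
    have : 0 ≤ a * Real.sqrt μ := mul_nonneg ha.le (Real.sqrt_nonneg μ)
    linarith
  have hpsd : ∀ k, (Y k * (Y k)ᴴ).PosSemidef :=
    fun k => Matrix.posSemidef_self_mul_conjTranspose _
  have hpsd0 : (X * Xᴴ).PosSemidef := Matrix.posSemidef_self_mul_conjTranspose _
  have hH : Tendsto (fun k => Y k * (Y k)ᴴ) atTop (nhds (X * Xᴴ)) :=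
    (((continuous_id.matrix_mul continuous_id.matrix_conjTranspose)).tendsto X).comp h
  have key := tendsto_sum_eig hg hpsd hpsd0 hH
  have e1 : ∀ k, Pa a (Y k) = ∑ i, g ((hpsd k).1.eigenvalues i) :=
    fun k => Pa_eq_sum_g a (Y k) (hpsd k)
  have e0 : Pa a X = ∑ i, g (hpsd0.1.eigenvalues i) := Pa_eq_sum_g a X hpsd0
  rw [e0]
  simpa [e1] using key

lemma Pa_nonneg {m n : ℕ} {a : ℝ} (ha : 0 < a) (X : Matrix (Fin m) (Fin n) ℝ) :
    0 ≤ Pa a X := by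
  refine Finset.sum_nonneg fun i _ => div_nonneg ?_ ?_
  · exact mul_nonneg ha.le (Real.sqrt_nonneg _)
  · have : 0 ≤ a * sv X i := mul_nonneg ha.le (Real.sqrt_nonneg _)
    linarith

theorem statement12 (m n d : ℕ) (hmn : m ≤ n) (a : ℝ) (ha : 0 < a)
    (A : Matrix (Fin m) (Fin n) ℝ →ₗ[ℝ] EuclideanSpace ℝ (Fin d))
    (b : EuclideanSpace ℝ (Fin d))
    (Xbar : Matrix (Fin m) (Fin n) ℝ) (hXbar : A Xbar = b)
    (lam : ℕ → ℝ) (hdec : StrictAnti lam) (hpos : ∀ k, 0 < lam k)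
    (hlim : Filter.Tendsto lam Filter.atTop (nhds 0))
    (Xseq : ℕ → Matrix (Fin m) (Fin n) ℝ)
    (hmin : ∀ (k : ℕ) (X : Matrix (Fin m) (Fin n) ℝ),
      ‖A (Xseq k) - b‖ ^ 2 + lam k * Pa a (Xseq k) ≤ ‖A X - b‖ ^ 2 + lam k * Pa a X)
    (Xstar : Matrix (Fin m) (Fin n) ℝ)
    (hacc : MapClusterPt Xstar Filter.atTop Xseq) :
    A Xstar = b ∧
      ∀ X : Matrix (Fin m) (Fin n) ℝ, A X = b → Pa a Xstar ≤ Pa a X := by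
  -- subsequence converging to Xstar
  have : FirstCountableTopology (Matrix (Fin m) (Fin n) ℝ) :=
    inferInstanceAs (FirstCountableTopology ((Fin m) → (Fin n) → ℝ))
  obtain ⟨ψ, hψmono, hψtend⟩ := TopologicalSpace.FirstCountableTopology.tendsto_subseq hacc
  have hA : Continuous A := A.continuous_of_finiteDimensional
  -- Part 1 : feasibility of Xstar
  have h1 : ∀ k, ‖A (Xseq k) - b‖ ^ 2 ≤ lam k * Pa a Xbar := by
    intro k
    have := hmin k Xbar
    rw [hXbar, sub_self, norm_zero] at this
    have hnn : 0 ≤ lam k * Pa a (Xseq k) := mul_nonneg (hpos k).le (Pa_nonneg ha _)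
    nlinarith
  have hsq0 : Tendsto (fun k => ‖A (Xseq k) - b‖ ^ 2) atTop (nhds 0) := by
    have hub : Tendsto (fun k => lam k * Pa a Xbar) atTop (nhds 0) := by
      simpa using hlim.mul_const (Pa a Xbar)
    exact tendsto_of_tendsto_of_tendsto_of_le_of_le tendsto_const_nhds hub
      (fun k => sq_nonneg _) h1
  have hfeas : A Xstar = b := by
    have hcont : Continuous fun X : Matrix (Fin m) (Fin n) ℝ => ‖A X - b‖ ^ 2 :=
      ((hA.sub continuous_const).norm).pow 2
    have ht1 : Tendsto (fun j => ‖A (Xseq (ψ j)) - b‖ ^ 2) atTop (nhds (‖A Xstar - b‖ ^ 2)) :=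
      (hcont.tendsto Xstar).comp hψtend
    have ht2 : Tendsto (fun j => ‖A (Xseq (ψ j)) - b‖ ^ 2) atTop (nhds 0) :=
      hsq0.comp hψmono.tendsto_atTop
    have : ‖A Xstar - b‖ ^ 2 = 0 := tendsto_nhds_unique ht1 ht2
    have h3 : A Xstar - b = 0 := by
      rw [pow_eq_zero_iff (two_ne_zero)] at this
      exact norm_eq_zero.mp this
    exact sub_eq_zero.mp h3
  refine ⟨hfeas, fun X hX => ?_⟩
  have h2 : ∀ k, Pa a (Xseq k) ≤ Pa a X := by
    intro k
    have := hmin k X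
    rw [hX, sub_self, norm_zero] at this
    have hnn : 0 ≤ ‖A (Xseq k) - b‖ ^ 2 := sq_nonneg _
    have : lam k * Pa a (Xseq k) ≤ lam k * Pa a X := by nlinarith
    exact le_of_mul_le_mul_left this (hpos k)
  have hPt : Tendsto (fun j => Pa a (Xseq (ψ j))) atTop (nhds (Pa a Xstar)) :=
    tendsto_Pa ha hψtend
  exact le_of_tendsto hPt (Filter.Eventually.of_forall fun j => h2 (ψ j))
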